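/- There exists a continuous surjection from the unit interval [0,1] onto the unit square [0,1] × [0,1]. -/

import Mathlib

open Filter Set Topology
open scoped BoundedContinuousFunction

noncomputable section SpaceFilling

namespace SpaceFillingAux

/-- Binary-value map: `half a = ∑ aₙ 2^{-(n+1)}`. -/
def half (a : ℕ → Bool) : ℝ := ∑' n, (if a n then ((2:ℝ)⁻¹) ^ (n + 1) else 0)

lemma half_term_le (a : ℕ → Bool) (n : ℕ) :
    ‖(if a n then ((2:ℝ)⁻¹) ^ (n + 1) else 0)‖ ≤ ((2:ℝ)⁻¹) ^ n := by
  split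
  · rw [Real.norm_of_nonneg (by positivity)]
    rw [pow_succ]
    nlinarith [pow_nonneg (by norm_num : (0:ℝ) ≤ 2⁻¹) n]
  · simp [pow_nonneg (by norm_num : (0:ℝ) ≤ 2⁻¹) n]

lemma half_summable (a : ℕ → Bool) :
    Summable (fun n => (if a n then ((2:ℝ)⁻¹) ^ (n + 1) else 0)) := by
  refine Summable.of_norm_bounded (summable_geometric_of_lt_one (by norm_num) (by norm_num))
    (half_term_le a)

lemma tsum_half_geom : ∑' n : ℕ, ((2:ℝ)⁻¹) ^ (n + 1) = 1 := by
  have h : ∑' n : ℕ, ((2:ℝ)⁻¹) ^ (n + 1) = 2⁻¹ * ∑' n : ℕ, ((2:ℝ)⁻¹) ^ n := by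
    rw [← tsum_mul_left]
    congr 1; ext n; rw [pow_succ]; ring
  rw [h, tsum_geometric_of_lt_one (by norm_num) (by norm_num)]
  norm_num

lemma half_mem_Icc (a : ℕ → Bool) : half a ∈ Icc (0:ℝ) 1 := by
  constructor
  · exact tsum_nonneg fun n => by split <;> positivity
  · have hsum : Summable (fun n : ℕ => ((2:ℝ)⁻¹) ^ (n + 1)) := by
      simpa [pow_succ] using (summable_geometric_of_lt_one (by norm_num : (0:ℝ) ≤ 2⁻¹)
        (by norm_num)).mul_right 2⁻¹
    calc half a ≤ ∑' n : ℕ, ((2:ℝ)⁻¹) ^ (n + 1) := by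
          refine Summable.tsum_le_tsum (fun n => ?_) (half_summable a) hsum
          split
          · exact le_rfl
          · positivity
      _ = 1 := tsum_half_geom

lemma half_continuous : Continuous half := by
  refine continuous_tsum (fun n => ?_)
    (summable_geometric_of_lt_one (by norm_num : (0:ℝ) ≤ 2⁻¹) (by norm_num))
    (fun n a => half_term_le a n)
  have : (fun a : ℕ → Bool => (if a n then ((2:ℝ)⁻¹) ^ (n + 1) else 0))
      = (fun b : Bool => if b then ((2:ℝ)⁻¹) ^ (n + 1) else 0) ∘ (fun a => a n) := rfl
  rw [this]
  exact Continuous.comp continuous_of_discreteTopology (continuous_apply n)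

/-- Greedy binary digits of `x`: partial sums. -/
def bseq (x : ℝ) : ℕ → ℝ
  | 0 => 0
  | n + 1 => if bseq x n + ((2:ℝ)⁻¹) ^ (n + 1) ≤ x then bseq x n + ((2:ℝ)⁻¹) ^ (n + 1)
      else bseq x n

/-- Greedy binary digits of `x`. -/
def bdig (x : ℝ) (n : ℕ) : Bool := decide (bseq x n + ((2:ℝ)⁻¹) ^ (n + 1) ≤ x)

lemma bseq_eq_sum (x : ℝ) (n : ℕ) :
    bseq x n = ∑ k ∈ Finset.range n, (if bdig x k then ((2:ℝ)⁻¹) ^ (k + 1) else 0) := by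
  induction n with
  | zero => simp [bseq]
  | succ n ih =>
    rw [Finset.sum_range_succ, ← ih]
    simp only [bseq, bdig, decide_eq_true_eq]
    by_cases h : bseq x n + ((2:ℝ)⁻¹) ^ (n + 1) ≤ x
    · rw [if_pos h, if_pos h]
    · rw [if_neg h, if_neg h, add_zero]

lemma bseq_invariant {x : ℝ} (hx : x ∈ Icc (0:ℝ) 1) (n : ℕ) :
    bseq x n ≤ x ∧ x ≤ bseq x n + ((2:ℝ)⁻¹) ^ n := by
  induction n with
  | zero => simpa [bseq] using ⟨hx.1, hx.2⟩
  | succ n ih =>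
    have hpow : ((2:ℝ)⁻¹) ^ n = ((2:ℝ)⁻¹) ^ (n + 1) + ((2:ℝ)⁻¹) ^ (n + 1) := by
      rw [pow_succ]; ring
    simp only [bseq]
    by_cases h : bseq x n + ((2:ℝ)⁻¹) ^ (n + 1) ≤ x
    · rw [if_pos h]
      refine ⟨h, ?_⟩
      have := ih.2
      rw [hpow] at this
      linarith
    · rw [if_neg h]
      push_neg at h
      exact ⟨ih.1, by linarith⟩


lemma half_bdig {x : ℝ} (hx : x ∈ Icc (0:ℝ) 1) : half (bdig x) = x := by
  have hs : HasSum (fun n => (if bdig x n then ((2:ℝ)⁻¹) ^ (n + 1) else 0)) (half (bdig x)) :=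
    (half_summable (bdig x)).hasSum
  have h1 : Tendsto (fun n => bseq x n) atTop (𝓝 (half (bdig x))) := by
    have := hs.tendsto_sum_nat
    refine this.congr fun n => (bseq_eq_sum x n).symm
  have h2 : Tendsto (fun n => bseq x n) atTop (𝓝 x) := by
    have hgeo : Tendsto (fun n : ℕ => x - ((2:ℝ)⁻¹) ^ n) atTop (𝓝 (x - 0)) :=
      tendsto_const_nhds.sub (tendsto_pow_atTop_nhds_zero_of_lt_one (by norm_num) (by norm_num))
    rw [sub_zero] at hgeo
    refine tendsto_of_tendsto_of_tendsto_of_le_of_le hgeo tendsto_const_nhds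
      (fun n => ?_) (fun n => (bseq_invariant hx n).1)
    have := (bseq_invariant hx n).2
    linarith
  exact tendsto_nhds_unique h1 h2

/-- The Cantor-set style embedding of the Cantor space into `[0,1]`, via the
`cantorFunction` from mathlib scaled by `2/3`. -/
def third (a : ℕ → Bool) : ℝ := (2/3) * Cardinal.cantorFunction 3⁻¹ a

lemma third_injective : Function.Injective third := by
  intro a b hab
  have := Cardinal.cantorFunction_injective (c := 3⁻¹) (by norm_num) (by norm_num)
  apply this
  have : (2/3 : ℝ) ≠ 0 := by norm_num
  exact mul_left_cancel₀ this hab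

lemma cantor_term_le (a : ℕ → Bool) (n : ℕ) :
    ‖Cardinal.cantorFunctionAux 3⁻¹ a n‖ ≤ ((3:ℝ)⁻¹) ^ n := by
  unfold Cardinal.cantorFunctionAux
  cases h : a n
  · simp [pow_nonneg (by norm_num : (0:ℝ) ≤ 3⁻¹) n]
  · simp [Real.norm_of_nonneg (pow_nonneg (by norm_num : (0:ℝ) ≤ 3⁻¹) n)]

lemma third_continuous : Continuous third := by
  unfold third Cardinal.cantorFunction
  refine continuous_const.mul ?_
  refine continuous_tsum (fun n => ?_)
    (summable_geometric_of_lt_one (by norm_num : (0:ℝ) ≤ 3⁻¹) (by norm_num))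
    (fun n a => cantor_term_le a n)
  have : (fun a : ℕ → Bool => Cardinal.cantorFunctionAux 3⁻¹ a n)
      = (fun b : Bool => cond b (((3:ℝ)⁻¹) ^ n) 0) ∘ (fun a => a n) := rfl
  rw [this]
  exact Continuous.comp (continuous_of_discreteTopology) (continuous_apply n)

lemma third_mem_Icc (a : ℕ → Bool) : third a ∈ Icc (0:ℝ) 1 := by
  have hsum := Cardinal.summable_cantor_function a (by norm_num : (0:ℝ) ≤ 3⁻¹) (by norm_num)
  constructor
  · refine mul_nonneg (by norm_num) ?_
    exact tsum_nonneg fun n => Cardinal.cantorFunctionAux_nonneg (by norm_num)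
  · have hle : Cardinal.cantorFunction 3⁻¹ a ≤ ∑' n : ℕ, ((3:ℝ)⁻¹) ^ n := by
      refine Summable.tsum_le_tsum (fun n => ?_) hsum
        (summable_geometric_of_lt_one (by norm_num) (by norm_num))
      unfold Cardinal.cantorFunctionAux
      cases h : a n
      · simp [pow_nonneg (by norm_num : (0:ℝ) ≤ 3⁻¹) n]
      · simp
    rw [tsum_geometric_of_lt_one (by norm_num) (by norm_num)] at hle
    have : Cardinal.cantorFunction 3⁻¹ a ≤ 3/2 := by
      convert hle using 1; norm_num
    unfold third
    linarith

/-- Interleave two boolean sequences. -/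
def interleave (a b : ℕ → Bool) (n : ℕ) : Bool :=
  if n % 2 = 0 then a (n / 2) else b (n / 2)

lemma interleave_even (a b : ℕ → Bool) : (fun n => interleave a b (2 * n)) = a := by
  funext n
  have h1 : (2 * n) % 2 = 0 := by omega
  have h2 : (2 * n) / 2 = n := by omega
  simp [interleave, h1, h2]

lemma interleave_odd (a b : ℕ → Bool) : (fun n => interleave a b (2 * n + 1)) = b := by
  funext n
  have h1 : (2 * n + 1) % 2 = 1 := by omega
  have h2 : (2 * n + 1) / 2 = n := by omega
  simp [interleave, h1, h2]

end SpaceFillingAux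

end SpaceFilling

open SpaceFillingAux in
/-- There exists a continuous surjection from the unit interval [0,1]
onto the unit square [0,1] × [0,1] (a space-filling curve). -/
theorem exists_space_filling_curve :
    ∃ F : ℝ → ℝ × ℝ, ContinuousOn F (Set.Icc 0 1) ∧
      F '' Set.Icc 0 1 = (Set.Icc (0:ℝ) 1) ×ˢ (Set.Icc (0:ℝ) 1) := by
  classical
  -- `third` is a closed embedding of the Cantor space into ℝ.
  have hemb : Topology.IsClosedEmbedding third :=
    third_continuous.isClosedEmbedding third_injective
  -- the two coordinate functions on the Cantor space
  let f₁ : (ℕ → Bool) →ᵇ ℝ := BoundedContinuousFunction.mkOfCompact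
    ⟨fun a => half (fun n => a (2 * n)),
      half_continuous.comp (continuous_pi fun n => continuous_apply (2 * n))⟩
  let f₂ : (ℕ → Bool) →ᵇ ℝ := BoundedContinuousFunction.mkOfCompact
    ⟨fun a => half (fun n => a (2 * n + 1)),
      half_continuous.comp (continuous_pi fun n => continuous_apply (2 * n + 1))⟩
  obtain ⟨g₁, hg₁mem, hg₁⟩ :=
    BoundedContinuousFunction.exists_extension_forall_mem_Icc_of_isClosedEmbedding f₁
      (fun a => half_mem_Icc _) zero_le_one hemb
  obtain ⟨g₂, hg₂mem, hg₂⟩ :=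
    BoundedContinuousFunction.exists_extension_forall_mem_Icc_of_isClosedEmbedding f₂
      (fun a => half_mem_Icc _) zero_le_one hemb
  refine ⟨fun t => (g₁ t, g₂ t), (g₁.continuous.prodMk g₂.continuous).continuousOn, ?_⟩
  apply Set.Subset.antisymm
  · rintro p ⟨t, _, rfl⟩
    exact ⟨hg₁mem t, hg₂mem t⟩
  · rintro ⟨x, y⟩ ⟨hx, hy⟩
    refine ⟨third (interleave (bdig x) (bdig y)), third_mem_Icc _, ?_⟩
    have h₁ : g₁ (third (interleave (bdig x) (bdig y))) = x := by
      have := congrFun hg₁ (interleave (bdig x) (bdig y))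
      simp only [Function.comp_apply] at this
      rw [this]
      show half (fun n => interleave (bdig x) (bdig y) (2 * n)) = x
      rw [interleave_even, half_bdig hx]
    have h₂ : g₂ (third (interleave (bdig x) (bdig y))) = y := by
      have := congrFun hg₂ (interleave (bdig x) (bdig y))
      simp only [Function.comp_apply] at this
      rw [this]
      show half (fun n => interleave (bdig x) (bdig y) (2 * n + 1)) = y
      rw [interleave_odd, half_bdig hy]
    simp [h₁, h₂]
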